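/- (Lemma 1) Let G be a finite simple graph on vertex set {1,…,n}, and let α : ℝ^{2n(2n−1)/2} → ℝ^n be the linear projection sending a vector y to (y_{1,n+1}, y_{2,n+2}, …, y_{n,2n}). Then α(F(G)) = Stable(G); hence the stable set polytope conv(Stable(G)) is the image under the affine map α of the face conv(F(G)) of the linear ordering polytope conv(LOP(2n)). -/

import Mathlib

open Finset

/-- `y ∈ LOP m`: `y` is the characteristic vector of a linear order (permutation `π`)
on `{1, …, m}`, with coordinates `y i j` for `1 ≤ i < j ≤ m` equal to `1` iff `π i < π j`;
coordinates outside the index range are normalized to `0`. -/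
def LOP (m : ℕ) : Set (ℕ → ℕ → ℝ) :=
  {y | (∀ i j, ¬(1 ≤ i ∧ i < j ∧ j ≤ m) → y i j = 0) ∧
    ∃ π : ℕ → ℕ, Set.BijOn π (Set.Icc 1 m) (Set.Icc 1 m) ∧
      ∀ i j, 1 ≤ i → i < j → j ≤ m → y i j = if π i < π j then (1 : ℝ) else 0}

/-- `Stable n G`: the vertex set of the stable set polytope of `G` on `{1,…,n}`:
0/1 vectors `x` with `x i + x j ≤ 1` for every edge `{i,j}` of `G`;
coordinates outside `{1,…,n}` are normalized to `0`. -/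
def Stable (n : ℕ) (G : SimpleGraph ℕ) : Set (ℕ → ℝ) :=
  {x | (∀ i, ¬(1 ≤ i ∧ i ≤ n) → x i = 0) ∧
    (∀ i, 1 ≤ i → i ≤ n → x i = 0 ∨ x i = 1) ∧
    ∀ i j, G.Adj i j → x i + x j ≤ 1}

/-- The face `F(G) ⊆ LOP (2n)`: all `y ∈ LOP (2n)` with `y i (n+j) = 0` and
`y j (n+i) = 0` for every edge `{i,j}` of `G` with `i < j`. -/
def FaceFG (n : ℕ) (G : SimpleGraph ℕ) : Set (ℕ → ℕ → ℝ) :=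
  {y | y ∈ LOP (2 * n) ∧
    ∀ i j, G.Adj i j → i < j → y i (n + j) = 0 ∧ y j (n + i) = 0}

/-- The linear projection `α` sending `y` to `(y 1 (n+1), …, y n (2n))`
(coordinates outside `{1,…,n}` are `0`). -/
def alphaProj (n : ℕ) (y : ℕ → ℕ → ℝ) : ℕ → ℝ := fun i =>
  if 1 ≤ i ∧ i ≤ n then y i (n + i) else 0


def rankIn (T : Finset ℕ) (i : ℕ) : ℕ := (T.filter (· ≤ i)).card
lemma rankIn_pos {T : Finset ℕ} {i : ℕ} (h : i ∈ T) : 1 ≤ rankIn T i := by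
  have : i ∈ T.filter (· ≤ i) := mem_filter.2 ⟨h, le_rfl⟩
  exact card_pos.2 ⟨i, this⟩
lemma rankIn_le (T : Finset ℕ) (i : ℕ) : rankIn T i ≤ T.card :=
  card_le_card (filter_subset _ _)
lemma rankIn_lt {T : Finset ℕ} {i j : ℕ} (hj : j ∈ T) (hij : i < j) :
    rankIn T i < rankIn T j := by
  apply card_lt_card
  constructor
  · intro a ha
    rcases mem_filter.1 ha with ⟨h1, h2⟩
    exact mem_filter.2 ⟨h1, by omega⟩
  · intro hsub
    have : j ∈ T.filter (· ≤ i) := hsub (mem_filter.2 ⟨hj, le_rfl⟩)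
    have := (mem_filter.1 this).2
    omega
lemma rankIn_injOn (T : Finset ℕ) : Set.InjOn (rankIn T) ↑T := by
  intro a ha b hb hab
  by_contra hne
  rcases Nat.lt_or_ge a b with h | h
  · exact absurd hab (Nat.ne_of_lt (rankIn_lt hb h))
  · have : b < a := by omega
    exact absurd hab.symm (Nat.ne_of_lt (rankIn_lt ha this))
lemma rankIn_surjOn (T : Finset ℕ) : Set.SurjOn (rankIn T) ↑T ↑(Finset.Icc 1 T.card) := by
  have himg : T.image (rankIn T) = Finset.Icc 1 T.card := by
    apply Finset.eq_of_subset_of_card_le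
    · intro m hm
      rcases Finset.mem_image.1 hm with ⟨a, ha, rfl⟩
      exact Finset.mem_Icc.2 ⟨rankIn_pos ha, rankIn_le T a⟩
    · rw [Finset.card_image_of_injOn (rankIn_injOn T)]
      simp
  intro m hm
  have : m ∈ T.image (rankIn T) := by rw [himg]; exact_mod_cast hm
  rcases Finset.mem_image.1 this with ⟨a, ha, rfl⟩
  exact ⟨a, by exact_mod_cast ha, rfl⟩

lemma exists_perm (n : ℕ) (x : ℕ → ℝ) (hx : ∀ i, 1 ≤ i → i ≤ n → x i = 0 ∨ x i = 1) :
    ∃ π : ℕ → ℕ, Set.BijOn π (Set.Icc 1 (2 * n)) (Set.Icc 1 (2 * n)) ∧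
      (∀ i, 1 ≤ i → i ≤ n → (π i < π (n + i) ↔ x i = 1)) ∧
      (∀ i j, 1 ≤ i → i ≤ n → 1 ≤ j → j ≤ n → i ≠ j → x i + x j ≤ 1 →
        ¬ π i < π (n + j)) := by
  classical
  set A : Finset ℕ := (Finset.Icc 1 n).filter (fun i => x i = 1) with hA
  set B : Finset ℕ := (Finset.Icc 1 n).filter (fun i => ¬ x i = 1) with hB
  have hab : A.card + B.card = n := by
    rw [hA, hB, Finset.card_filter_add_card_filter_not, Nat.card_Icc]; omega
  set a := A.card
  set b := B.card
  set π : ℕ → ℕ := fun v =>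
    if v ≤ n then (if x v = 1 then b + rankIn A v else n + a + rankIn B v)
    else (if x (v - n) = 1 then n + rankIn A (v - n) else rankIn B (v - n)) with hπ
  -- membership helpers
  have memA : ∀ {i}, 1 ≤ i → i ≤ n → x i = 1 → i ∈ A := fun h1 h2 h3 =>
    mem_filter.2 ⟨Finset.mem_Icc.2 ⟨h1, h2⟩, h3⟩
  have memB : ∀ {i}, 1 ≤ i → i ≤ n → ¬ x i = 1 → i ∈ B := fun h1 h2 h3 =>
    mem_filter.2 ⟨Finset.mem_Icc.2 ⟨h1, h2⟩, h3⟩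
  -- value descriptions
  have hval1 : ∀ {v}, 1 ≤ v → v ≤ n → x v = 1 →
      π v = b + rankIn A v ∧ b + 1 ≤ π v ∧ π v ≤ b + a := by
    intro v h1 h2 h3
    have hm := memA h1 h2 h3
    have := rankIn_pos hm
    have := rankIn_le A v
    refine ⟨by simp [hπ, h2, h3], by simp [hπ, h2, h3]; omega, by simp [hπ, h2, h3]; omega⟩
  have hval2 : ∀ {v}, 1 ≤ v → v ≤ n → ¬ x v = 1 →
      π v = n + a + rankIn B v ∧ n + a + 1 ≤ π v ∧ π v ≤ n + a + b := by
    intro v h1 h2 h3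
    have hm := memB h1 h2 h3
    have := rankIn_pos hm
    have := rankIn_le B v
    refine ⟨by simp [hπ, h2, h3], by simp [hπ, h2, h3]; omega, by simp [hπ, h2, h3]; omega⟩
  have hval3 : ∀ {v}, n + 1 ≤ v → v ≤ 2 * n → x (v - n) = 1 →
      π v = n + rankIn A (v - n) ∧ n + 1 ≤ π v ∧ π v ≤ n + a := by
    intro v h1 h2 h3
    have hvn : ¬ v ≤ n := by omega
    have hm := memA (i := v - n) (by omega) (by omega) h3
    have := rankIn_pos hm
    have := rankIn_le A (v - n)
    refine ⟨by simp [hπ, hvn, h3], by simp [hπ, hvn, h3]; omega, by simp [hπ, hvn, h3]; omega⟩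
  have hval4 : ∀ {v}, n + 1 ≤ v → v ≤ 2 * n → ¬ x (v - n) = 1 →
      π v = rankIn B (v - n) ∧ 1 ≤ π v ∧ π v ≤ b := by
    intro v h1 h2 h3
    have hvn : ¬ v ≤ n := by omega
    have hm := memB (i := v - n) (by omega) (by omega) h3
    have := rankIn_pos hm
    have := rankIn_le B (v - n)
    refine ⟨by simp [hπ, hvn, h3], by simp [hπ, hvn, h3]; omega, by simp [hπ, hvn, h3]; omega⟩
  refine ⟨π, ⟨?_, ?_, ?_⟩, ?_, ?_⟩
  · -- MapsTo
    intro v hv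
    simp only [Set.mem_Icc] at hv ⊢
    by_cases hvn : v ≤ n
    · by_cases h3 : x v = 1
      · obtain ⟨_, h4, h5⟩ := hval1 hv.1 hvn h3; omega
      · obtain ⟨_, h4, h5⟩ := hval2 hv.1 hvn h3; omega
    · by_cases h3 : x (v - n) = 1
      · obtain ⟨_, h4, h5⟩ := hval3 (by omega) hv.2 h3; omega
      · obtain ⟨_, h4, h5⟩ := hval4 (by omega) hv.2 h3; omega
  · -- InjOn
    intro u hu v hv heq
    simp only [Set.mem_Icc] at hu hv
    by_cases hun : u ≤ n <;> by_cases hvn : v ≤ n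
    · by_cases h3 : x u = 1 <;> by_cases h4 : x v = 1
      · obtain ⟨e1, _, _⟩ := hval1 hu.1 hun h3
        obtain ⟨e2, _, _⟩ := hval1 hv.1 hvn h4
        have : rankIn A u = rankIn A v := by omega
        exact rankIn_injOn A (memA hu.1 hun h3) (memA hv.1 hvn h4) this
      · obtain ⟨e1, p1, p2⟩ := hval1 hu.1 hun h3
        obtain ⟨e2, p3, p4⟩ := hval2 hv.1 hvn h4
        omega
      · obtain ⟨e1, p1, p2⟩ := hval2 hu.1 hun h3
        obtain ⟨e2, p3, p4⟩ := hval1 hv.1 hvn h4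
        omega
      · obtain ⟨e1, _, _⟩ := hval2 hu.1 hun h3
        obtain ⟨e2, _, _⟩ := hval2 hv.1 hvn h4
        have : rankIn B u = rankIn B v := by omega
        exact rankIn_injOn B (memB hu.1 hun h3) (memB hv.1 hvn h4) this
    · by_cases h3 : x u = 1 <;> by_cases h4 : x (v - n) = 1
      · obtain ⟨e1, p1, p2⟩ := hval1 hu.1 hun h3
        obtain ⟨e2, p3, p4⟩ := hval3 (by omega) hv.2 h4
        omega
      · obtain ⟨e1, p1, p2⟩ := hval1 hu.1 hun h3
        obtain ⟨e2, p3, p4⟩ := hval4 (by omega) hv.2 h4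
        omega
      · obtain ⟨e1, p1, p2⟩ := hval2 hu.1 hun h3
        obtain ⟨e2, p3, p4⟩ := hval3 (by omega) hv.2 h4
        omega
      · obtain ⟨e1, p1, p2⟩ := hval2 hu.1 hun h3
        obtain ⟨e2, p3, p4⟩ := hval4 (by omega) hv.2 h4
        omega
    · by_cases h3 : x (u - n) = 1 <;> by_cases h4 : x v = 1
      · obtain ⟨e1, p1, p2⟩ := hval3 (by omega) hu.2 h3
        obtain ⟨e2, p3, p4⟩ := hval1 hv.1 hvn h4
        omega
      · obtain ⟨e1, p1, p2⟩ := hval3 (by omega) hu.2 h3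
        obtain ⟨e2, p3, p4⟩ := hval2 hv.1 hvn h4
        omega
      · obtain ⟨e1, p1, p2⟩ := hval4 (by omega) hu.2 h3
        obtain ⟨e2, p3, p4⟩ := hval1 hv.1 hvn h4
        omega
      · obtain ⟨e1, p1, p2⟩ := hval4 (by omega) hu.2 h3
        obtain ⟨e2, p3, p4⟩ := hval2 hv.1 hvn h4
        omega
    · by_cases h3 : x (u - n) = 1 <;> by_cases h4 : x (v - n) = 1
      · obtain ⟨e1, _, _⟩ := hval3 (by omega) hu.2 h3
        obtain ⟨e2, _, _⟩ := hval3 (by omega) hv.2 h4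
        have : rankIn A (u - n) = rankIn A (v - n) := by omega
        have := rankIn_injOn A (memA (i := u - n) (by omega) (by omega) h3)
          (memA (i := v - n) (by omega) (by omega) h4) this
        omega
      · obtain ⟨e1, p1, p2⟩ := hval3 (by omega) hu.2 h3
        obtain ⟨e2, p3, p4⟩ := hval4 (by omega) hv.2 h4
        omega
      · obtain ⟨e1, p1, p2⟩ := hval4 (by omega) hu.2 h3
        obtain ⟨e2, p3, p4⟩ := hval3 (by omega) hv.2 h4
        omega
      · obtain ⟨e1, _, _⟩ := hval4 (by omega) hu.2 h3
        obtain ⟨e2, _, _⟩ := hval4 (by omega) hv.2 h4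
        have : rankIn B (u - n) = rankIn B (v - n) := by omega
        have := rankIn_injOn B (memB (i := u - n) (by omega) (by omega) h3)
          (memB (i := v - n) (by omega) (by omega) h4) this
        omega
  · -- SurjOn
    intro m hm
    simp only [Set.mem_Icc] at hm
    rcases Nat.lt_or_ge b m with hb1 | hb1
    · rcases Nat.lt_or_ge n m with hn1 | hn1
      · rcases Nat.lt_or_ge (n + a) m with hna1 | hna1
        · -- block 4: m = n + a + rankIn B j, j ∈ B
          obtain ⟨j, hj, hj2⟩ := rankIn_surjOn B
            (Finset.mem_coe.2 (Finset.mem_Icc.2 (by omega)) : m - (n + a) ∈ ↑(Finset.Icc 1 B.card))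
          have hjIcc : j ∈ Finset.Icc 1 n := (Finset.mem_filter.1 (Finset.mem_coe.1 hj)).1
          have hjx : ¬ x j = 1 := (Finset.mem_filter.1 (Finset.mem_coe.1 hj)).2
          have hj1n := Finset.mem_Icc.1 hjIcc
          refine ⟨j, ?_, ?_⟩
          · simp only [Set.mem_Icc]; omega
          · obtain ⟨e, _, _⟩ := hval2 hj1n.1 hj1n.2 hjx
            omega
        · -- block 3: m = n + rankIn A j, use v = n + j with j ∈ A
          obtain ⟨j, hj, hj2⟩ := rankIn_surjOn A
            (Finset.mem_coe.2 (Finset.mem_Icc.2 (by omega)) : m - n ∈ ↑(Finset.Icc 1 A.card))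
          have hjIcc : j ∈ Finset.Icc 1 n := (Finset.mem_filter.1 (Finset.mem_coe.1 hj)).1
          have hjx : x j = 1 := (Finset.mem_filter.1 (Finset.mem_coe.1 hj)).2
          have hj1n := Finset.mem_Icc.1 hjIcc
          refine ⟨n + j, ?_, ?_⟩
          · simp only [Set.mem_Icc]; omega
          · obtain ⟨e, _, _⟩ := hval3 (v := n + j) (by omega) (by omega)
              (by simpa using hjx)
            have : rankIn A (n + j - n) = m - n := by rw [show n + j - n = j by omega]; exact hj2
            omega
      · -- block 2: m = b + rankIn A j, j ∈ A
        obtain ⟨j, hj, hj2⟩ := rankIn_surjOn A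
          (Finset.mem_coe.2 (Finset.mem_Icc.2 (by omega)) : m - b ∈ ↑(Finset.Icc 1 A.card))
        have hjIcc : j ∈ Finset.Icc 1 n := (Finset.mem_filter.1 (Finset.mem_coe.1 hj)).1
        have hjx : x j = 1 := (Finset.mem_filter.1 (Finset.mem_coe.1 hj)).2
        have hj1n := Finset.mem_Icc.1 hjIcc
        refine ⟨j, ?_, ?_⟩
        · simp only [Set.mem_Icc]; omega
        · obtain ⟨e, _, _⟩ := hval1 hj1n.1 hj1n.2 hjx
          omega
    · -- block 1: m = rankIn B j, use v = n + j with j ∈ B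
      obtain ⟨j, hj, hj2⟩ := rankIn_surjOn B
        (Finset.mem_coe.2 (Finset.mem_Icc.2 (by omega)) : m ∈ ↑(Finset.Icc 1 B.card))
      have hjIcc : j ∈ Finset.Icc 1 n := (Finset.mem_filter.1 (Finset.mem_coe.1 hj)).1
      have hjx : ¬ x j = 1 := (Finset.mem_filter.1 (Finset.mem_coe.1 hj)).2
      have hj1n := Finset.mem_Icc.1 hjIcc
      refine ⟨n + j, ?_, ?_⟩
      · simp only [Set.mem_Icc]; omega
      · obtain ⟨e, _, _⟩ := hval4 (v := n + j) (by omega) (by omega)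
          (by simpa using hjx)
        have : rankIn B (n + j - n) = m := by rw [show n + j - n = j by omega]; exact hj2
        omega
  · -- diagonal characterisation
    intro i h1 h2
    by_cases h3 : x i = 1
    · obtain ⟨e1, p1, p2⟩ := hval1 h1 h2 h3
      obtain ⟨e2, p3, p4⟩ := hval3 (v := n + i) (by omega) (by omega) (by simpa using h3)
      have hr : rankIn A (n + i - n) = rankIn A i := by rw [show n + i - n = i by omega]
      have ha1 : 1 ≤ a := by
        have := card_pos.2 ⟨i, memA h1 h2 h3⟩
        omega
      constructor
      · intro _; exact h3
      · intro _; omega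
    · obtain ⟨e1, p1, p2⟩ := hval2 h1 h2 h3
      obtain ⟨e2, p3, p4⟩ := hval4 (v := n + i) (by omega) (by omega) (by simpa using h3)
      constructor
      · intro hlt; omega
      · intro h; exact absurd h h3
  · -- edge condition
    intro i j h1 h2 h3 h4 hij hsum
    by_cases hxi : x i = 1 <;> by_cases hxj : x j = 1
    · exfalso
      rw [hxi, hxj] at hsum
      norm_num at hsum
    · obtain ⟨e1, p1, p2⟩ := hval1 h1 h2 hxi
      obtain ⟨e2, p3, p4⟩ := hval4 (v := n + j) (by omega) (by omega) (by simpa using hxj)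
      omega
    · obtain ⟨e1, p1, p2⟩ := hval2 h1 h2 hxi
      obtain ⟨e2, p3, p4⟩ := hval3 (v := n + j) (by omega) (by omega) (by simpa using hxj)
      omega
    · obtain ⟨e1, p1, p2⟩ := hval2 h1 h2 hxi
      obtain ⟨e2, p3, p4⟩ := hval4 (v := n + j) (by omega) (by omega) (by simpa using hxj)
      omega

/-- Every coordinate of a vertex of the linear ordering polytope is nonnegative. -/
lemma LOP_nonneg {m : ℕ} {y : ℕ → ℕ → ℝ} (hy : y ∈ LOP m) (a b : ℕ) : 0 ≤ y a b := by
  obtain ⟨h0, π, hπ, hval⟩ := hy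
  by_cases h : 1 ≤ a ∧ a < b ∧ b ≤ m
  · rw [hval a b h.1 h.2.1 h.2.2]
    split <;> norm_num
  · rw [h0 a b h]

lemma zero_mem_LOP (m : ℕ) : (0 : ℕ → ℕ → ℝ) ∈ LOP m := by
  refine ⟨fun i j _ => rfl, fun k => m + 1 - k, ⟨?_, ?_, ?_⟩, ?_⟩
  · intro v hv
    simp only [Set.mem_Icc] at hv ⊢
    omega
  · intro u hu v hv h
    simp only [Set.mem_Icc] at hu hv
    dsimp only at h
    omega
  · intro v hv
    simp only [Set.mem_Icc] at hv
    refine ⟨m + 1 - v, by simp only [Set.mem_Icc]; omega, ?_⟩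
    dsimp only
    omega
  · intro i j h1 h2 h3
    rw [if_neg]
    · rfl
    · dsimp only
      omega

lemma zero_mem_FaceFG (n : ℕ) (G : SimpleGraph ℕ) : (0 : ℕ → ℕ → ℝ) ∈ FaceFG n G :=
  ⟨zero_mem_LOP (2 * n), fun _ _ _ _ => ⟨rfl, rfl⟩⟩

/-- `alphaProj` as a linear map. -/
def alphaLin (n : ℕ) : (ℕ → ℕ → ℝ) →ₗ[ℝ] (ℕ → ℝ) where
  toFun := alphaProj n
  map_add' y z := by
    funext i
    simp only [alphaProj, Pi.add_apply]
    split <;> simp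
  map_smul' c y := by
    funext i
    simp only [alphaProj, Pi.smul_apply, smul_eq_mul, RingHom.id_apply]
    split <;> simp

open scoped Classical

/-- The finite set of (ordered) edges of `G` inside `{1,…,n}`. -/
noncomputable def edgeFin (n : ℕ) (G : SimpleGraph ℕ) : Finset (ℕ × ℕ) :=
  (Finset.Icc 1 n ×ˢ Finset.Icc 1 n).filter (fun p => G.Adj p.1 p.2 ∧ p.1 < p.2)

/-- The exposing continuous linear functional. -/
noncomputable def lfun (n : ℕ) (G : SimpleGraph ℕ) : (ℕ → ℕ → ℝ) →L[ℝ] ℝ where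
  toLinearMap :=
    { toFun := fun y => -∑ p ∈ edgeFin n G, (y p.1 (n + p.2) + y p.2 (n + p.1))
      map_add' := fun y z => by
        simp only [Pi.add_apply]
        rw [← neg_add, ← Finset.sum_add_distrib]
        congr 1
        apply Finset.sum_congr rfl
        intro p _
        ring
      map_smul' := fun c y => by
        simp only [Pi.smul_apply, smul_eq_mul, RingHom.id_apply]
        rw [mul_neg, Finset.mul_sum, neg_inj]
        apply Finset.sum_congr rfl
        intro p _
        ring }
  cont := by
    apply Continuous.neg
    apply continuous_finset_sum
    intro p _
    fun_prop

lemma lfun_apply (n : ℕ) (G : SimpleGraph ℕ) (y : ℕ → ℕ → ℝ) :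
    lfun n G y = -∑ p ∈ edgeFin n G, (y p.1 (n + p.2) + y p.2 (n + p.1)) := rfl

lemma lfun_nonpos {n : ℕ} {G : SimpleGraph ℕ} {z : ℕ → ℕ → ℝ}
    (hz : z ∈ LOP (2 * n)) : lfun n G z ≤ 0 := by
  rw [lfun_apply, neg_nonpos]
  apply Finset.sum_nonneg
  intro p _
  have := LOP_nonneg hz p.1 (n + p.2)
  have := LOP_nonneg hz p.2 (n + p.1)
  linarith

lemma lfun_eq_zero_of_face {n : ℕ} {G : SimpleGraph ℕ} {z : ℕ → ℕ → ℝ}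
    (hz : z ∈ FaceFG n G) : lfun n G z = 0 := by
  rw [lfun_apply, neg_eq_zero]
  apply Finset.sum_eq_zero
  intro p hp
  have hp' := Finset.mem_filter.1 hp
  obtain ⟨h1, h2⟩ := hz.2 p.1 p.2 hp'.2.1 hp'.2.2
  rw [h1, h2, add_zero]

lemma face_of_lfun_zero {n : ℕ} {G : SimpleGraph ℕ} {z : ℕ → ℕ → ℝ}
    (hG : ∀ i j, G.Adj i j → 1 ≤ i ∧ i ≤ n ∧ 1 ≤ j ∧ j ≤ n)
    (hz : z ∈ LOP (2 * n)) (h0 : lfun n G z = 0) : z ∈ FaceFG n G := by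
  classical
  rw [lfun_apply, neg_eq_zero] at h0
  have hterm : ∀ p ∈ edgeFin n G, z p.1 (n + p.2) + z p.2 (n + p.1) = 0 := by
    rw [← Finset.sum_eq_zero_iff_of_nonneg]
    · exact h0
    · intro p _
      have := LOP_nonneg hz p.1 (n + p.2)
      have := LOP_nonneg hz p.2 (n + p.1)
      linarith
  refine ⟨hz, fun i j hadj hij => ?_⟩
  obtain ⟨h1, h2, h3, h4⟩ := hG i j hadj
  have hp : (i, j) ∈ edgeFin n G := by
    apply Finset.mem_filter.2
    refine ⟨Finset.mem_product.2 ⟨Finset.mem_Icc.2 ⟨h1, h2⟩, Finset.mem_Icc.2 ⟨h3, h4⟩⟩, hadj, hij⟩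
  have := hterm (i, j) hp
  have n1 := LOP_nonneg hz i (n + j)
  have n2 := LOP_nonneg hz j (n + i)
  constructor <;> linarith

/-- forward direction of Lemma 1. -/
lemma alphaProj_mem_Stable {n : ℕ} {G : SimpleGraph ℕ}
    (hG : ∀ i j, G.Adj i j → 1 ≤ i ∧ i ≤ n ∧ 1 ≤ j ∧ j ≤ n)
    {y : ℕ → ℕ → ℝ} (hy : y ∈ FaceFG n G) : alphaProj n y ∈ Stable n G := by
  obtain ⟨⟨h0, π, hπ, hval⟩, hface⟩ := hy
  have hdiag : ∀ i, 1 ≤ i → i ≤ n →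
      alphaProj n y i = if π i < π (n + i) then (1 : ℝ) else 0 := by
    intro i h1 h2
    rw [alphaProj, if_pos ⟨h1, h2⟩]
    exact hval i (n + i) h1 (by omega) (by omega)
  have key : ∀ u v, G.Adj u v → u < v → alphaProj n y u + alphaProj n y v ≤ 1 := by
    intro u v hadj huv
    obtain ⟨h1, h2, h3, h4⟩ := hG u v hadj
    rw [hdiag u h1 h2, hdiag v h3 h4]
    obtain ⟨f1, f2⟩ := hface u v hadj huv
    rw [hval u (n + v) h1 (by omega) (by omega)] at f1
    rw [hval v (n + u) h3 (by omega) (by omega)] at f2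
    have g1 : ¬ π u < π (n + v) := by
      intro h; rw [if_pos h] at f1; norm_num at f1
    have g2 : ¬ π v < π (n + u) := by
      intro h; rw [if_pos h] at f2; norm_num at f2
    by_cases c1 : π u < π (n + u) <;> by_cases c2 : π v < π (n + v) <;>
      simp only [if_pos, if_neg, c1, c2, if_true, if_false]
    · exfalso; omega
    · norm_num
    · norm_num
    · norm_num
  refine ⟨?_, ?_, ?_⟩
  · intro i hi
    rw [alphaProj, if_neg hi]
  · intro i h1 h2
    rw [hdiag i h1 h2]
    split
    · right; rfl
    · left; rfl
  · intro i j hadj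
    rcases Nat.lt_or_ge i j with h | h
    · exact key i j hadj h
    · have hne : i ≠ j := hadj.ne
      have h' : j < i := by omega
      have := key j i hadj.symm h'
      linarith

/-- backward direction of Lemma 1 (the construction). -/
lemma exists_face_of_stable {n : ℕ} {G : SimpleGraph ℕ}
    (hG : ∀ i j, G.Adj i j → 1 ≤ i ∧ i ≤ n ∧ 1 ≤ j ∧ j ≤ n)
    {x : ℕ → ℝ} (hx : x ∈ Stable n G) :
    ∃ y ∈ FaceFG n G, alphaProj n y = x := by
  obtain ⟨hx0, hx01, hxE⟩ := hx
  obtain ⟨π, hπ, hdiag, hedge⟩ := exists_perm n x hx01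
  set y : ℕ → ℕ → ℝ := fun i j =>
    if 1 ≤ i ∧ i < j ∧ j ≤ 2 * n then (if π i < π j then (1 : ℝ) else 0) else 0 with hy
  have hyval : ∀ i j, 1 ≤ i → i < j → j ≤ 2 * n →
      y i j = if π i < π j then (1 : ℝ) else 0 := by
    intro i j h1 h2 h3
    rw [hy]
    exact if_pos ⟨h1, h2, h3⟩
  have hyLOP : y ∈ LOP (2 * n) := by
    refine ⟨fun i j h => by rw [hy]; exact if_neg h, π, hπ, hyval⟩
  refine ⟨y, ⟨hyLOP, ?_⟩, ?_⟩
  · intro i j hadj hij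
    obtain ⟨h1, h2, h3, h4⟩ := hG i j hadj
    have hne : i ≠ j := hadj.ne
    have e1 := hedge i j h1 h2 h3 h4 hne (hxE i j hadj)
    have e2 := hedge j i h3 h4 h1 h2 (Ne.symm hne) (by have := hxE i j hadj; linarith)
    constructor
    · rw [hyval i (n + j) h1 (by omega) (by omega), if_neg e1]
    · rw [hyval j (n + i) h3 (by omega) (by omega), if_neg e2]
  · funext i
    by_cases hi : 1 ≤ i ∧ i ≤ n
    · rw [alphaProj, if_pos hi, hyval i (n + i) hi.1 (by omega) (by omega)]
      rcases hx01 i hi.1 hi.2 with h | h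
      · rw [if_neg, h]
        rw [hdiag i hi.1 hi.2, h]
        norm_num
      · rw [if_pos, h]
        rw [hdiag i hi.1 hi.2]
        exact h
    · rw [alphaProj, if_neg hi, hx0 i hi]

/-- Lemma 1: `α(F(G)) = Stable(G)`; hence the stable set polytope
`conv (Stable G)` is the image under the affine map `α` of the face
`conv (F(G))` of the linear ordering polytope `conv (LOP (2n))`. -/
theorem alphaProj_image_faceFG (n : ℕ) (G : SimpleGraph ℕ)
    (hG : ∀ i j, G.Adj i j → 1 ≤ i ∧ i ≤ n ∧ 1 ≤ j ∧ j ≤ n) :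
    alphaProj n '' FaceFG n G = Stable n G ∧
    alphaProj n '' (convexHull ℝ (FaceFG n G)) = convexHull ℝ (Stable n G) ∧
    IsExposed ℝ (convexHull ℝ (LOP (2 * n))) (convexHull ℝ (FaceFG n G)) := by
  classical
  have part1 : alphaProj n '' FaceFG n G = Stable n G := by
    apply Set.eq_of_subset_of_subset
    · rintro _ ⟨y, hy, rfl⟩
      exact alphaProj_mem_Stable hG hy
    · intro x hx
      obtain ⟨y, hy, hxy⟩ := exists_face_of_stable hG hx
      exact ⟨y, hy, hxy⟩
  refine ⟨part1, ?_, ?_⟩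
  · have : alphaProj n '' (convexHull ℝ (FaceFG n G)) =
        convexHull ℝ (alphaProj n '' FaceFG n G) := by
      have := AffineMap.image_convexHull ((alphaLin n).toAffineMap) (FaceFG n G)
      simpa [alphaLin] using this
    rw [this, part1]
  · intro _
    refine ⟨lfun n G, ?_⟩
    have hFL : FaceFG n G ⊆ LOP (2 * n) := fun z hz => hz.1
    have hlin : IsLinearMap ℝ (lfun n G) := ⟨map_add _, map_smul _⟩
    have hconvle : convexHull ℝ (LOP (2 * n)) ⊆ {w | lfun n G w ≤ 0} :=
      convexHull_min (fun z hz => lfun_nonpos hz) (convex_halfSpace_le hlin 0)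
    have hconveq : convexHull ℝ (FaceFG n G) ⊆ {w | lfun n G w = 0} :=
      convexHull_min (fun z hz => lfun_eq_zero_of_face hz) (convex_hyperplane hlin 0)
    have h0A : (0 : ℕ → ℕ → ℝ) ∈ convexHull ℝ (LOP (2 * n)) :=
      subset_convexHull ℝ _ (zero_mem_LOP (2 * n))
    apply Set.eq_of_subset_of_subset
    · intro v hv
      refine ⟨convexHull_mono hFL hv, ?_⟩
      intro z hz
      have h1 : lfun n G v = 0 := hconveq hv
      have h2 : lfun n G z ≤ 0 := hconvle hz
      rw [h1]; exact h2
    · rintro v ⟨hvA, hvmax⟩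
      have hv0 : lfun n G v = 0 := by
        have h1 : lfun n G v ≤ 0 := hconvle hvA
        have h2 : (0 : ℝ) ≤ lfun n G v := by
          have := hvmax 0 h0A
          simpa using this
        linarith
      rw [_root_.convexHull_eq] at hvA
      obtain ⟨ι, t, w, z, hw, hw1, hz, hcm⟩ := hvA
      have hsum : ∑ i ∈ t, w i * lfun n G (z i) = 0 := by
        have : v = ∑ i ∈ t, w i • z i := by
          rw [← hcm]; exact Finset.centerMass_eq_of_sum_1 t z hw1
        calc ∑ i ∈ t, w i * lfun n G (z i)
            = lfun n G (∑ i ∈ t, w i • z i) := by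
              rw [map_sum]
              apply Finset.sum_congr rfl
              intro i _
              rw [map_smul, smul_eq_mul]
          _ = 0 := by rw [← this, hv0]
      have hterms : ∀ i ∈ t, w i * lfun n G (z i) = 0 := by
        rw [← Finset.sum_eq_zero_iff_of_nonpos]
        · exact hsum
        · intro i hi
          exact mul_nonpos_iff.2 (Or.inl ⟨hw i hi, lfun_nonpos (hz i hi)⟩)
      have hzface : ∀ i ∈ t.filter (fun i => w i ≠ 0), z i ∈ FaceFG n G := by
        intro i hi
        obtain ⟨hit, hwi⟩ := Finset.mem_filter.1 hi
        have : lfun n G (z i) = 0 := by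
          rcases mul_eq_zero.1 (hterms i hit) with h | h
          · exact absurd h hwi
          · exact h
        exact face_of_lfun_zero hG (hz i hit) this
      rw [← hcm, ← Finset.centerMass_filter_ne_zero z]
      apply Finset.centerMass_mem_convexHull
      · intro i hi
        exact hw i (Finset.mem_filter.1 hi).1
      · rw [Finset.sum_filter_ne_zero, hw1]
        norm_num
      · exact hzface
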